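/- arXiv:2108.03059 — 2 statements merged into one kernel-verified Lean document; each statement's English description precedes it below -/
import Mathlib

section
/- Let A₁ be an AO set and A₂ be a HO set in G, with A₁ and A₂ disjoint. Then for any pattern p, N(G*)p = 𝟏 if and only if N(G)p = x̄_{A₁} and x_{A₂}·p = 1. Moreover, A₁ is NO and A₂ is AO in G*, and ν(G*) = ν(G) − 1. -/
open Matrix
open scoped Classical

/-- The closed neighborhood matrix of a simple graph over `ℤ₂`:
`N(G) u v = 1` iff `u = v` or `u` is adjacent to `v`. -/
noncomputable def nbhdMatrix {V : Type*} [Fintype V] (G : SimpleGraph V) :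
    Matrix V V (ZMod 2) :=
  Matrix.of fun u v => if u = v ∨ G.Adj u v then 1 else 0

/-- The nullity of a matrix over `ℤ₂`: the dimension of its kernel. -/
noncomputable def nullityM {V : Type*} [Fintype V] (M : Matrix V V (ZMod 2)) : ℕ :=
  Module.finrank (ZMod 2) (LinearMap.ker M.mulVecLin)

/-- The nullity `ν(G)` of a graph. -/
noncomputable def graphNullity {V : Type*} [Fintype V] (G : SimpleGraph V) : ℕ :=
  nullityM (nbhdMatrix G)

/-- Characteristic vector of a set of vertices. -/
noncomputable def chi {V : Type*} (A : Set V) : V → ZMod 2 :=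
  fun v => if v ∈ A then 1 else 0

/-- A configuration `c` is solvable (w.r.t. the matrix `M`) if `M p = c` for some pattern `p`. -/
def Solv {V : Type*} [Fintype V] (M : Matrix V V (ZMod 2)) (c : V → ZMod 2) : Prop :=
  ∃ p : V → ZMod 2, M.mulVec p = c

/-- `A` is `c`-always odd activated: `A` is solvable and `x_A · p = 1` for every solving
pattern `p` for `c`. -/
def cAO {V : Type*} [Fintype V] (M : Matrix V V (ZMod 2)) (c : V → ZMod 2)
    (A : Set V) : Prop :=
  Solv M (chi A) ∧ ∀ p : V → ZMod 2, M.mulVec p = c → chi A ⬝ᵥ p = 1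

/-- `A` is `c`-never odd activated: `A` is solvable and `x_A · p = 0` for every solving
pattern `p` for `c`. -/
def cNO {V : Type*} [Fintype V] (M : Matrix V V (ZMod 2)) (c : V → ZMod 2)
    (A : Set V) : Prop :=
  Solv M (chi A) ∧ ∀ p : V → ZMod 2, M.mulVec p = c → chi A ⬝ᵥ p = 0

/-- `A` is always odd activated (AO): `𝟏`-always odd activated. -/
def AO {V : Type*} [Fintype V] (M : Matrix V V (ZMod 2)) (A : Set V) : Prop :=
  cAO M 1 A

/-- `A` is never odd activated (NO): `𝟏`-never odd activated. -/
def NO {V : Type*} [Fintype V] (M : Matrix V V (ZMod 2)) (A : Set V) : Prop :=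
  cNO M 1 A

/-- `A` is half odd activated (HO): `x_A` is not solvable. -/
def HO {V : Type*} [Fintype V] (M : Matrix V V (ZMod 2)) (A : Set V) : Prop :=
  ¬ Solv M (chi A)

/-- The closed neighborhood matrix of the graph `G*` obtained from `G` by toggling every
pair of vertices between the disjoint sets `A₁` and `A₂`:
`N(G*) = N(G) + x_{A₁} x_{A₂}ᵗ + x_{A₂} x_{A₁}ᵗ` over `ℤ₂`. -/
noncomputable def starMatrix {V : Type*} [Fintype V] (G : SimpleGraph V)
    (A₁ A₂ : Set V) : Matrix V V (ZMod 2) :=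
  nbhdMatrix G + Matrix.vecMulVec (chi A₁) (chi A₂) + Matrix.vecMulVec (chi A₂) (chi A₁)

section myaux
variable {V : Type*} [Fintype V]

lemma myZ2a (u v w a : ZMod 2) (e : u + a * v + w = 0) : u + a * v = w := by
  revert u v w a; decide
lemma myZ2b (u v : ZMod 2) (e : u + v = 0) : u = v := by
  revert u v; decide
lemma myZ2_add_self (a : ZMod 2) : a + a = 0 := by revert a; decide
lemma myZ2_mul_self (a : ZMod 2) : a * a = a := by revert a; decide

lemma myVecMulVec_mulVec (w v p : V → ZMod 2) : (vecMulVec w v).mulVec p = (v ⬝ᵥ p) • w := by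
  funext i
  simp [Matrix.mulVec, dotProduct, vecMulVec_apply, Finset.mul_sum, mul_comm, mul_assoc,
    mul_left_comm]

lemma myQuad (M : Matrix V V (ZMod 2)) (h : Mᵀ = M) (hd : ∀ v, M v v = 1) (k : V → ZMod 2) :
    k ⬝ᵥ M.mulVec k = (1 : V → ZMod 2) ⬝ᵥ k := by
  have hsym : ∀ i j, M i j = M j i := fun i j =>
    (congrFun (congrFun h i) j).symm.trans (Matrix.transpose_apply M i j)
  have expand : k ⬝ᵥ M.mulVec k = ∑ p : V × V, k p.1 * M p.1 p.2 * k p.2 := by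
    rw [Fintype.sum_prod_type]
    simp [Matrix.mulVec, dotProduct, Finset.mul_sum, mul_assoc]
  rw [expand]
  have hsplit := Finset.sum_filter_add_sum_filter_not Finset.univ
    (fun p : V × V => p.1 = p.2) (fun p => k p.1 * M p.1 p.2 * k p.2)
  have hoff : ∑ p ∈ Finset.univ.filter (fun p : V × V => ¬ p.1 = p.2),
      k p.1 * M p.1 p.2 * k p.2 = 0 := by
    apply Finset.sum_involution (fun p _ => (p.2, p.1))
    · intro p hp
      have : k p.2 * M p.2 p.1 * k p.1 = k p.1 * M p.1 p.2 * k p.2 := by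
        rw [hsym p.2 p.1]; ring
      rw [this, myZ2_add_self]
    · intro p hp _ hc
      simp only [Finset.mem_filter] at hp
      exact hp.2 (congrArg Prod.fst hc).symm
    · intro p hp
      simp only [Finset.mem_filter, Finset.mem_univ, true_and] at hp ⊢
      exact fun hc => hp hc.symm
    · intro p hp; rfl
  have hdiag : ∑ p ∈ Finset.univ.filter (fun p : V × V => p.1 = p.2),
      k p.1 * M p.1 p.2 * k p.2 = ∑ i : V, k i := by
    rw [Finset.sum_filter, Fintype.sum_prod_type]
    simp only [Finset.sum_ite_eq, Finset.mem_univ, if_true]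
    exact Finset.sum_congr rfl fun i _ => by
      rw [hd i, mul_one, myZ2_mul_self (k i)]
  rw [← hsplit, hoff, hdiag, add_zero]
  simp [dotProduct]

lemma myDotMulVecSymm (M : Matrix V V (ZMod 2)) (h : Mᵀ = M) (u w : V → ZMod 2) :
    u ⬝ᵥ M.mulVec w = M.mulVec u ⬝ᵥ w := by
  rw [Matrix.dotProduct_mulVec, ← Matrix.mulVec_transpose, h, dotProduct_comm]

lemma myMemRange (M : Matrix V V (ZMod 2)) (h : Mᵀ = M) (c : V → ZMod 2)
    (hc : ∀ k, M.mulVec k = 0 → c ⬝ᵥ k = 0) : ∃ p, M.mulVec p = c := by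
  by_contra hn
  have hcm : c ∉ LinearMap.range M.mulVecLin := by
    simpa [Matrix.mulVecLin_apply] using hn
  obtain ⟨f, hf1, hf2⟩ :=
    (LinearMap.range M.mulVecLin).exists_dual_map_eq_bot_of_notMem hcm inferInstance
  set w : V → ZMod 2 := fun i => f (Pi.single i 1) with hw
  have hfw : ∀ x : V → ZMod 2, f x = w ⬝ᵥ x := by
    intro x
    have hx : x = ∑ i : V, x i • Pi.single i (1 : ZMod 2) := by
      funext j
      simp [Pi.single_apply, Finset.sum_apply]
    conv_lhs => rw [hx]
    rw [map_sum]
    simp [dotProduct, hw, mul_comm]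
  have hker : M.mulVec w = 0 := by
    have hv : ∀ p, w ⬝ᵥ M.mulVec p = 0 := by
      intro p
      rw [← hfw]
      have hmem : M.mulVec p ∈ LinearMap.range M.mulVecLin :=
        ⟨p, by simp [Matrix.mulVecLin_apply]⟩
      have := Submodule.mem_map_of_mem (f := f) hmem
      rw [hf2] at this
      exact (Submodule.mem_bot (ZMod 2)).mp this
    funext i
    have := hv (Pi.single i 1)
    rw [myDotMulVecSymm M h] at this
    simpa [dotProduct, Pi.single_apply, mul_comm] using this
  have h0 := hc w hker
  rw [dotProduct_comm] at h0
  exact hf1 (by rw [hfw]; exact h0)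

lemma myNbhdSymm (G : SimpleGraph V) : (nbhdMatrix G)ᵀ = nbhdMatrix G := by
  funext i j
  simp only [Matrix.transpose_apply, nbhdMatrix, Matrix.of_apply]
  exact if_congr (or_congr eq_comm (G.adj_comm j i)) rfl rfl

lemma myNbhdDiag (G : SimpleGraph V) (v : V) : nbhdMatrix G v v = 1 := by
  simp [nbhdMatrix]

lemma myOneSolv (G : SimpleGraph V) : ∃ r, (nbhdMatrix G).mulVec r = 1 := by
  apply myMemRange _ (myNbhdSymm G)
  intro k hk
  have h1 := myQuad (nbhdMatrix G) (myNbhdSymm G) (myNbhdDiag G) k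
  rw [hk] at h1
  rw [dotProduct_comm]
  simpa [dotProduct_comm] using h1.symm

end myaux


/-- Proposition (AO, HO): the odd dominating patterns of `G*` are exactly the solving
patterns `p` of `x̄_{A₁}` in `G` with `x_{A₂} · p = 1`; in `G*`, `A₁` is NO and `A₂` is
AO, and `ν(G*) = ν(G) − 1`. -/
theorem stmt16 {V : Type*} [Fintype V] (G : SimpleGraph V) (A₁ A₂ : Set V)
    (hd : Disjoint A₁ A₂)
    (h1 : AO (nbhdMatrix G) A₁) (h2 : HO (nbhdMatrix G) A₂) :
    (∀ p : V → ZMod 2, (starMatrix G A₁ A₂).mulVec p = 1 ↔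
      ((nbhdMatrix G).mulVec p = chi A₁ + 1 ∧ chi A₂ ⬝ᵥ p = 1)) ∧
    NO (starMatrix G A₁ A₂) A₁ ∧ AO (starMatrix G A₁ A₂) A₂ ∧
    nullityM (starMatrix G A₁ A₂) + 1 = nullityM (nbhdMatrix G) := by
  classical
  set N := nbhdMatrix G with hN
  have hsymm : Nᵀ = N := myNbhdSymm G
  have hquad : ∀ k, k ⬝ᵥ N.mulVec k = (1 : V → ZMod 2) ⬝ᵥ k :=
    myQuad N hsymm (myNbhdDiag G)
  have hadj : ∀ u w, u ⬝ᵥ N.mulVec w = N.mulVec u ⬝ᵥ w := myDotMulVecSymm N hsymm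
  obtain ⟨r, hr⟩ : ∃ r, N.mulVec r = 1 := myOneSolv G
  obtain ⟨q, hq⟩ := h1.1
  have hstar : ∀ p, (starMatrix G A₁ A₂).mulVec p
      = N.mulVec p + (chi A₂ ⬝ᵥ p) • chi A₁ + (chi A₁ ⬝ᵥ p) • chi A₂ := by
    intro p
    simp [starMatrix, Matrix.add_mulVec, myVecMulVec_mulVec, hN]
  have hL3 : ∀ k, N.mulVec k = chi A₁ → chi A₁ ⬝ᵥ k = 1 := by
    intro k hk
    have h1r := h1.2 r hr
    have e1 : chi A₁ ⬝ᵥ k = (1 : V → ZMod 2) ⬝ᵥ k := by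
      rw [← hk, dotProduct_comm, hquad]
    have e2 : (1 : V → ZMod 2) ⬝ᵥ k = 1 := by
      rw [← hr, ← hadj r k, hk, dotProduct_comm]
      exact h1r
    rw [e1, e2]
  have hL4 : ∃ k, N.mulVec k = 0 ∧ chi A₂ ⬝ᵥ k = 1 := by
    by_contra hcon
    push_neg at hcon
    apply h2
    apply myMemRange N hsymm
    intro k hk
    exact (by decide : ∀ a : ZMod 2, a ≠ 1 → a = 0) _ (hcon k hk)
  have hL5a : ∀ k, N.mulVec k = 0 → chi A₁ ⬝ᵥ k = 0 := by
    intro k hk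
    rw [← hq, ← hadj q k, hk, dotProduct_zero]
  have hb0' : ∀ p, N.mulVec p = chi A₁ + 1 → chi A₁ ⬝ᵥ p = 0 := by
    intro p hp
    have hqd := hquad p
    rw [hp, dotProduct_add] at hqd
    rw [dotProduct_comm p (1 : V → ZMod 2)] at hqd
    have := (by decide : ∀ u v : ZMod 2, u + v = v → u = 0) _ _ hqd
    rw [dotProduct_comm]
    exact this
  have hiff : ∀ p : V → ZMod 2, (starMatrix G A₁ A₂).mulVec p = 1 ↔
      (N.mulVec p = chi A₁ + 1 ∧ chi A₂ ⬝ᵥ p = 1) := by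
    intro p
    constructor
    · intro hp
      rw [hstar p] at hp
      have hb0 : chi A₁ ⬝ᵥ p = 0 := by
        rcases (by decide : ∀ c : ZMod 2, c = 0 ∨ c = 1) (chi A₁ ⬝ᵥ p) with h | h
        · exact h
        · exfalso
          apply h2
          refine ⟨r + p + (chi A₂ ⬝ᵥ p) • q, ?_⟩
          rw [Matrix.mulVec_add, Matrix.mulVec_add, Matrix.mulVec_smul, hr, hq]
          rw [h] at hp
          funext i
          have e := congrFun hp i
          simp only [Pi.add_apply, Pi.smul_apply, Pi.one_apply, smul_eq_mul, one_mul] at e ⊢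
          generalize (N.mulVec p) i = u at e ⊢
          generalize chi A₁ i = v at e ⊢
          generalize chi A₂ i = w at e ⊢
          generalize chi A₂ ⬝ᵥ p = a at e ⊢
          revert u v w a
          decide
      rw [hb0, zero_smul, add_zero] at hp
      rcases (by decide : ∀ c : ZMod 2, c = 0 ∨ c = 1) (chi A₂ ⬝ᵥ p) with h | h
      · exfalso
        rw [h, zero_smul, add_zero] at hp
        have := h1.2 p hp
        rw [this] at hb0
        exact one_ne_zero hb0
      · refine ⟨?_, h⟩
        rw [h, one_smul] at hp
        funext i
        have e := congrFun hp i
        simp only [Pi.add_apply, Pi.one_apply] at e ⊢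
        generalize (N.mulVec p) i = u at e ⊢
        generalize chi A₁ i = v at e ⊢
        revert u v
        decide
    · rintro ⟨hp1, hp2⟩
      have hb0 : chi A₁ ⬝ᵥ p = 0 := hb0' p hp1
      rw [hstar p, hp1, hp2, hb0, one_smul, zero_smul, add_zero]
      funext i
      simp only [Pi.add_apply, Pi.one_apply]
      generalize chi A₁ i = v
      revert v
      decide
  refine ⟨hiff, ⟨?_, ?_⟩, ⟨?_, ?_⟩, ?_⟩
  · obtain ⟨k, hk0, hk1⟩ := hL4
    refine ⟨k, ?_⟩
    rw [hstar k, hk0, hk1, hL5a k hk0, one_smul, zero_smul, add_zero, zero_add]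
  · intro p hp
    obtain ⟨hp1, _⟩ := (hiff p).mp hp
    exact hb0' p hp1
  · obtain ⟨k, hk0, hk1⟩ := hL4
    set p₀ := q + (1 + chi A₂ ⬝ᵥ q) • k with hp₀
    have hNp₀ : N.mulVec p₀ = chi A₁ := by
      rw [hp₀, Matrix.mulVec_add, Matrix.mulVec_smul, hq, hk0, smul_zero, add_zero]
    have hx₂p₀ : chi A₂ ⬝ᵥ p₀ = 1 := by
      rw [hp₀, dotProduct_add, dotProduct_smul, hk1]
      exact (by decide : ∀ a : ZMod 2, a + (1 + a) • 1 = 1) _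
    refine ⟨p₀, ?_⟩
    rw [hstar p₀, hNp₀, hx₂p₀, hL3 p₀ hNp₀, one_smul, one_smul]
    funext i
    simp only [Pi.add_apply]
    exact (by decide : ∀ v w : ZMod 2, v + v + w = w) _ _
  · intro p hp
    exact ((hiff p).mp hp).2
  · set f : (V → ZMod 2) →ₗ[ZMod 2] ZMod 2 :=
      { toFun := fun x => chi A₂ ⬝ᵥ x
        map_add' := fun x y => by simp [dotProduct_add]
        map_smul' := fun c x => by simp [dotProduct_smul] } with hf
    set K := LinearMap.ker N.mulVecLin with hK
    have hkerstar : LinearMap.ker (starMatrix G A₁ A₂).mulVecLin = K ⊓ LinearMap.ker f := by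
      ext k
      simp only [LinearMap.mem_ker, Submodule.mem_inf, Matrix.mulVecLin_apply, hK, hf,
        LinearMap.coe_mk, AddHom.coe_mk]
      constructor
      · intro hk
        rw [hstar k] at hk
        have hb0 : chi A₁ ⬝ᵥ k = 0 := by
          rcases (by decide : ∀ c : ZMod 2, c = 0 ∨ c = 1) (chi A₁ ⬝ᵥ k) with h | h
          · exact h
          · exfalso
            apply h2
            refine ⟨k + (chi A₂ ⬝ᵥ k) • q, ?_⟩
            rw [Matrix.mulVec_add, Matrix.mulVec_smul, hq]
            rw [h] at hk
            funext i
            have e := congrFun hk i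
            simp only [Pi.add_apply, Pi.smul_apply, Pi.zero_apply, smul_eq_mul, one_mul] at e ⊢
            generalize (N.mulVec k) i = u at e ⊢
            generalize chi A₁ i = v at e ⊢
            generalize chi A₂ i = w at e ⊢
            generalize chi A₂ ⬝ᵥ k = a at e ⊢
            exact myZ2a u v w a e
        rw [hb0, zero_smul, add_zero] at hk
        rcases (by decide : ∀ c : ZMod 2, c = 0 ∨ c = 1) (chi A₂ ⬝ᵥ k) with h | h
        · rw [h, zero_smul, add_zero] at hk
          exact ⟨hk, h⟩
        · exfalso
          rw [h, one_smul] at hk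
          have hNk : N.mulVec k = chi A₁ := by
            funext i
            have e := congrFun hk i
            simp only [Pi.add_apply, Pi.zero_apply] at e
            generalize (N.mulVec k) i = u at e ⊢
            generalize chi A₁ i = v at e ⊢
            exact myZ2b u v e
          have := hL3 k hNk
          rw [this] at hb0
          exact one_ne_zero hb0
      · rintro ⟨hk0, hk2⟩
        rw [hstar k, hk0, hk2, hL5a k hk0, zero_smul, zero_smul, add_zero, add_zero]
    let g := f.domRestrict K
    obtain ⟨k, hk0, hk1⟩ := hL4
    have hkK : k ∈ K := by simpa [hK, Matrix.mulVecLin_apply] using hk0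
    have hrange : LinearMap.range g = ⊤ := by
      rw [Submodule.eq_top_iff']
      intro x
      rcases (by decide : ∀ c : ZMod 2, c = 0 ∨ c = 1) x with h | h
      · rw [h]; exact Submodule.zero_mem _
      · rw [h]
        exact ⟨⟨k, hkK⟩, by simpa [g, hf] using hk1⟩
    have hrn := LinearMap.finrank_range_add_finrank_ker g
    rw [hrange] at hrn
    have htop : Module.finrank (ZMod 2) (⊤ : Submodule (ZMod 2) (ZMod 2)) = 1 := by
      simp [finrank_top]
    rw [htop] at hrn
    have hkerg : LinearMap.ker g = Submodule.comap K.subtype (K ⊓ LinearMap.ker f) := by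
      rw [LinearMap.ker_domRestrict, Submodule.comap_inf, Submodule.comap_subtype_self,
        top_inf_eq]
    have hequiv : (Submodule.comap K.subtype (K ⊓ LinearMap.ker f)) ≃ₗ[ZMod 2]
        (K ⊓ LinearMap.ker f : Submodule (ZMod 2) (V → ZMod 2)) :=
      Submodule.comapSubtypeEquivOfLe inf_le_left
    have hfr : Module.finrank (ZMod 2) (LinearMap.ker g)
        = Module.finrank (ZMod 2) (K ⊓ LinearMap.ker f : Submodule (ZMod 2) (V → ZMod 2)) := by
      rw [hkerg]
      exact hequiv.finrank_eq
    rw [hfr] at hrn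
    show nullityM (starMatrix G A₁ A₂) + 1 = Module.finrank (ZMod 2) K
    rw [nullityM, hkerstar]
    omega
end

section
/- Let A₁ and A₂ be disjoint HO sets in G such that A₁ ∪ A₂ is NO in G. Then for any pattern p, N(G*)p = 𝟏 if and only if either (N(G)p = 𝟏 with x_{A₁}·p = x_{A₂}·p = 0) or (N(G)p = x̄_{A₁∪A₂} with x_{A₁}·p = x_{A₂}·p = 1). Moreover, A₁ and A₂ are HO in G*, and ν(G*) = ν(G). -/
open Matrix
open scoped Classical

lemma z2cases : ∀ z : ZMod 2, z = 0 ∨ z = 1 := by decide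
lemma z2add : ∀ z : ZMod 2, z + z = 0 := by decide
lemma z2mul : ∀ z : ZMod 2, z * z = z := by decide

lemma symm_dot {V : Type*} [Fintype V] (M : Matrix V V (ZMod 2)) (hM : Mᵀ = M)
    (x y : V → ZMod 2) : M.mulVec x ⬝ᵥ y = x ⬝ᵥ M.mulVec y := by
  rw [dotProduct_comm, dotProduct_mulVec, ← Matrix.mulVec_transpose, hM,
    dotProduct_comm]

-- quadratic form identity: x ⬝ᵥ M x = diag ⬝ᵥ x  for symmetric M over ZMod 2
lemma quad_form {V : Type*} [Fintype V] (M : Matrix V V (ZMod 2)) (hM : Mᵀ = M)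
    (x : V → ZMod 2) : x ⬝ᵥ M.mulVec x = (fun v => M v v) ⬝ᵥ x := by
  classical
  have expand : x ⬝ᵥ M.mulVec x
      = ∑ p ∈ Finset.univ ×ˢ Finset.univ, x p.1 * M p.1 p.2 * x p.2 := by
    rw [Finset.sum_product]
    simp only [dotProduct, Matrix.mulVec, dotProduct, Finset.mul_sum]
    congr 1; funext u; congr 1; funext v; ring
  have hsplit : (Finset.univ ×ˢ Finset.univ : Finset (V × V))
      = (Finset.univ : Finset V).diag ∪ (Finset.univ : Finset V).offDiag :=
    (Finset.diag_union_offDiag _).symm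
  have hoff : ∑ p ∈ (Finset.univ : Finset V).offDiag, x p.1 * M p.1 p.2 * x p.2 = 0 := by
    apply Finset.sum_involution (fun p _ => (p.2, p.1))
    · intro p _
      have : M p.2 p.1 = M p.1 p.2 := congrFun (congrFun hM.symm p.2) p.1
      simp only [this]
      have : x p.1 * M p.1 p.2 * x p.2 = x p.2 * M p.1 p.2 * x p.1 := by ring
      rw [← this]; exact z2add _
    · intro p hp _
      intro h
      have := (Finset.mem_offDiag.mp hp).2.2
      exact this (congrArg Prod.snd h.symm ▸ (congrArg Prod.fst h).symm)
    · intro p hp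
      have h := Finset.mem_offDiag.mp hp
      exact Finset.mem_offDiag.mpr ⟨h.2.1, h.1, fun e => h.2.2 e.symm⟩
    · intro p _; rfl
  have hdiag : ∑ p ∈ (Finset.univ : Finset V).diag, x p.1 * M p.1 p.2 * x p.2
      = (fun v => M v v) ⬝ᵥ x := by
    rw [Finset.sum_diag]
    simp only [dotProduct]
    congr 1; funext v
    calc x v * M v v * x v = M v v * (x v * x v) := by ring
      _ = M v v * x v := by rw [z2mul]
  rw [expand, hsplit, Finset.sum_union (Finset.disjoint_diag_offDiag _), hoff, hdiag, add_zero]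

lemma toDual_basisFun_apply {V : Type*} [Fintype V] (x y : V → ZMod 2) :
    (Pi.basisFun (ZMod 2) V).toDual x y = x ⬝ᵥ y := by
  classical
  conv_lhs => rw [← (Pi.basisFun (ZMod 2) V).sum_repr x]
  rw [map_sum]
  have hone : ∀ i : V, ((Pi.basisFun (ZMod 2) V).toDual ((Pi.basisFun (ZMod 2) V) i)) y = y i :=
    fun i => by rw [Module.Basis.toDual_apply_right, Pi.basisFun_repr]
  simp only [LinearMap.sum_apply, LinearMap.smul_apply, _root_.map_smul, Pi.basisFun_repr]
  simp only [hone, dotProduct, smul_eq_mul]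

lemma mem_range_of_orth {V : Type*} [Fintype V] (M : Matrix V V (ZMod 2)) (hM : Mᵀ = M)
    (c : V → ZMod 2) (h : ∀ k, M.mulVec k = 0 → c ⬝ᵥ k = 0) :
    ∃ p, M.mulVec p = c := by
  classical
  set b := Pi.basisFun (ZMod 2) V with hb
  set f := M.mulVecLin with hf
  have hmem : b.toDual c ∈ (LinearMap.ker f).dualAnnihilator := by
    rw [Submodule.mem_dualAnnihilator]
    intro k hk
    rw [toDual_basisFun_apply]
    exact h k (by simpa [hf, Matrix.mulVecLin_apply] using hk)
  rw [← LinearMap.range_dualMap_eq_dualAnnihilator_ker] at hmem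
  obtain ⟨φ, hφ⟩ := hmem
  obtain ⟨x, hx⟩ := b.toDualEquiv.surjective φ
  refine ⟨x, ?_⟩
  have key : ∀ y, M.mulVec x ⬝ᵥ y = c ⬝ᵥ y := by
    intro y
    have h1 := DFunLike.congr_fun hφ y
    have hxφ : φ = b.toDual x := by rw [← hx]; rfl
    rw [hxφ] at h1
    have h2 : f.dualMap (b.toDual x) y = x ⬝ᵥ M.mulVec y := by
      simp only [LinearMap.dualMap_apply, hf, Matrix.mulVecLin_apply]
      exact toDual_basisFun_apply _ _
    rw [h2, toDual_basisFun_apply] at h1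
    rw [symm_dot M hM, h1]
  funext v
  have := key (Pi.single v 1)
  simpa [dotProduct_single] using this

lemma nbhd_symm {V : Type*} [Fintype V] (G : SimpleGraph V) :
    (nbhdMatrix G)ᵀ = nbhdMatrix G := by
  ext u v
  show nbhdMatrix G v u = nbhdMatrix G u v
  simp only [nbhdMatrix, Matrix.of_apply]
  exact if_congr (or_congr eq_comm (G.adj_comm v u)) rfl rfl

lemma nbhd_diag {V : Type*} [Fintype V] (G : SimpleGraph V) :
    (fun v => nbhdMatrix G v v) = (1 : V → ZMod 2) := by
  funext v; simp [nbhdMatrix]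

lemma chi_union_eq {V : Type*} (A₁ A₂ : Set V) (hd : Disjoint A₁ A₂) :
    chi (A₁ ∪ A₂) = chi A₁ + chi A₂ := by
  funext v
  simp only [chi, Pi.add_apply, Set.mem_union]
  by_cases h1 : v ∈ A₁ <;> by_cases h2 : v ∈ A₂
  · exact absurd h2 (Set.disjoint_left.mp hd h1)
  · simp [h1, h2]
  · simp [h1, h2]
  · simp [h1, h2]

lemma vecMulVec_mulVec' {V : Type*} [Fintype V] (a b p : V → ZMod 2) :
    (Matrix.vecMulVec a b).mulVec p = (b ⬝ᵥ p) • a := by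
  funext v
  simp only [Matrix.mulVec, Matrix.vecMulVec_apply, dotProduct, Pi.smul_apply,
    smul_eq_mul]
  rw [Finset.sum_mul]
  exact Finset.sum_congr rfl fun u _ => by ring

lemma star_mulVec {V : Type*} [Fintype V] (G : SimpleGraph V) (A₁ A₂ : Set V)
    (p : V → ZMod 2) :
    (starMatrix G A₁ A₂).mulVec p = (nbhdMatrix G).mulVec p
      + (chi A₂ ⬝ᵥ p) • chi A₁ + (chi A₁ ⬝ᵥ p) • chi A₂ := by
  simp only [starMatrix, Matrix.add_mulVec, vecMulVec_mulVec']

/-- Proposition (HO, HO, union NO): the odd dominating patterns of `G*` are exactly the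
odd dominating patterns `p` of `G` with `x_{A₁} · p = x_{A₂} · p = 0` together with the
solving patterns `p` of `x̄_{A₁∪A₂}` in `G` with `x_{A₁} · p = x_{A₂} · p = 1`; `A₁`
and `A₂` are HO in `G*`, and `ν(G*) = ν(G)`. -/
theorem stmt19 {V : Type*} [Fintype V] (G : SimpleGraph V) (A₁ A₂ : Set V)
    (hd : Disjoint A₁ A₂)
    (h1 : HO (nbhdMatrix G) A₁) (h2 : HO (nbhdMatrix G) A₂)
    (h3 : NO (nbhdMatrix G) (A₁ ∪ A₂)) :
    (∀ p : V → ZMod 2, (starMatrix G A₁ A₂).mulVec p = 1 ↔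
      (((nbhdMatrix G).mulVec p = 1 ∧ chi A₁ ⬝ᵥ p = 0 ∧ chi A₂ ⬝ᵥ p = 0) ∨
       ((nbhdMatrix G).mulVec p = chi (A₁ ∪ A₂) + 1 ∧
         chi A₁ ⬝ᵥ p = 1 ∧ chi A₂ ⬝ᵥ p = 1))) ∧
    HO (starMatrix G A₁ A₂) A₁ ∧ HO (starMatrix G A₁ A₂) A₂ ∧
    nullityM (starMatrix G A₁ A₂) = nullityM (nbhdMatrix G) := by
  classical
  have hNs : (nbhdMatrix G)ᵀ = nbhdMatrix G := nbhd_symm G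
  have hchiu : chi (A₁ ∪ A₂) = chi A₁ + chi A₂ := chi_union_eq A₁ A₂ hd
  have htwo : ∀ x : V → ZMod 2, x + x = 0 := fun x => funext fun v => z2add _
  have htwo' : (2 : V → ZMod 2) = 0 := by
    funext v; show (2 : ZMod 2) = 0; decide
  have z2eq : ∀ a b : ZMod 2, a + b = 0 → a = b := by decide
  have quadN : ∀ x : V → ZMod 2,
      x ⬝ᵥ (nbhdMatrix G).mulVec x = (1 : V → ZMod 2) ⬝ᵥ x := by
    intro x; rw [quad_form _ hNs, nbhd_diag]
  obtain ⟨⟨q, hq⟩, hno⟩ := h3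
  rw [hchiu] at hq
  have hNO : ∀ p, (nbhdMatrix G).mulVec p = 1 → (chi A₁ + chi A₂) ⬝ᵥ p = 0 := by
    intro p hp; have := hno p hp; rwa [hchiu] at this
  obtain ⟨r, hr⟩ := mem_range_of_orth (nbhdMatrix G) hNs 1 (fun k hk => by
    have := quadN k; rw [hk, dotProduct_zero] at this; exact this.symm)
  have hk1 : ∃ k, (nbhdMatrix G).mulVec k = 0 ∧ chi A₁ ⬝ᵥ k = 1 := by
    by_contra hcon
    push_neg at hcon
    apply h1
    apply mem_range_of_orth (nbhdMatrix G) hNs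
    intro k hk
    rcases z2cases (chi A₁ ⬝ᵥ k) with h | h
    · exact h
    · exact absurd h (hcon k hk)
  obtain ⟨k₁, hk₁0, hk₁1⟩ := hk1
  have F1 : ∀ k, (nbhdMatrix G).mulVec k = 0 → chi A₁ ⬝ᵥ k = chi A₂ ⬝ᵥ k := by
    intro k hk
    apply z2eq
    have h0 : (chi A₁ + chi A₂) ⬝ᵥ k = 0 := by
      rw [← hq, symm_dot _ hNs, hk, dotProduct_zero]
    rwa [add_dotProduct] at h0
  have F2 : ∀ p, (nbhdMatrix G).mulVec p = chi A₁ + chi A₂ →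
      chi A₁ ⬝ᵥ p = chi A₂ ⬝ᵥ p := by
    intro p hp
    apply z2eq
    have e1 : (chi A₁ + chi A₂) ⬝ᵥ p = (1 : V → ZMod 2) ⬝ᵥ q := by
      rw [← hq, symm_dot _ hNs, hp, ← hq]
      exact quadN q
    have e2 : (1 : V → ZMod 2) ⬝ᵥ q = 0 := by
      rw [← hr, symm_dot _ hNs, hq, dotProduct_comm]
      exact hNO r hr
    rw [add_dotProduct] at e1
    exact e1.trans e2
  have F3 : ∀ p, (nbhdMatrix G).mulVec p = 1 → chi A₁ ⬝ᵥ p = chi A₂ ⬝ᵥ p := by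
    intro p hp; apply z2eq
    have := hNO p hp; rwa [add_dotProduct] at this
  have hp0 : ∃ p₀, (nbhdMatrix G).mulVec p₀ = chi A₁ + chi A₂ ∧ chi A₁ ⬝ᵥ p₀ = 1 := by
    rcases z2cases (chi A₁ ⬝ᵥ q) with h | h
    · exact ⟨q + k₁, by rw [Matrix.mulVec_add, hq, hk₁0, add_zero],
        by rw [dotProduct_add, h, hk₁1, zero_add]⟩
    · exact ⟨q, hq, h⟩
  obtain ⟨p₀, hp₀N, hp₀1⟩ := hp0
  have hp₀2 : chi A₂ ⬝ᵥ p₀ = 1 := by rw [← F2 p₀ hp₀N]; exact hp₀1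
  have hS : ∀ p : V → ZMod 2, (starMatrix G A₁ A₂).mulVec p = (nbhdMatrix G).mulVec p
      + (chi A₂ ⬝ᵥ p) • chi A₁ + (chi A₁ ⬝ᵥ p) • chi A₂ := star_mulVec G A₁ A₂
  refine ⟨?_, ?_, ?_, ?_⟩
  · -- part 1: the iff
    intro p
    constructor
    · intro hp
      rw [hS p] at hp
      rcases z2cases (chi A₁ ⬝ᵥ p) with ha | ha <;> rcases z2cases (chi A₂ ⬝ᵥ p) with hb | hb
      · rw [ha, hb, zero_smul, zero_smul, add_zero, add_zero] at hp
        exact Or.inl ⟨hp, ha, hb⟩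
      · -- a = 0, b = 1 : N p + chi A₁ = 1, solve chi A₁, contradiction
        rw [ha, hb, zero_smul, one_smul, add_zero] at hp
        exact absurd ⟨p + r, by
          rw [Matrix.mulVec_add, hr]
          linear_combination (norm := ring_nf) hp + htwo' * (1 - chi A₁)⟩ h1
      · -- a = 1, b = 0 : N p + chi A₂ = 1, solve chi A₂, contradiction
        rw [ha, hb, one_smul, zero_smul, add_zero] at hp
        exact absurd ⟨p + r, by
          rw [Matrix.mulVec_add, hr]
          linear_combination (norm := ring_nf) hp + htwo' * (1 - chi A₂)⟩ h2
      · -- a = 1, b = 1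
        rw [ha, hb, one_smul, one_smul] at hp
        refine Or.inr ⟨?_, ha, hb⟩
        rw [hchiu]
        linear_combination (norm := ring_nf) hp - htwo' * (chi A₁ + chi A₂)
    · rintro (⟨hNp, ha, hb⟩ | ⟨hNp, ha, hb⟩)
      · rw [hS p, ha, hb, zero_smul, zero_smul, add_zero, add_zero, hNp]
      · rw [hS p, ha, hb, one_smul, one_smul, hNp, hchiu]
        linear_combination (norm := ring_nf) htwo' * (chi A₁ + chi A₂)
  · -- HO A₁ in G*
    rintro ⟨p, hp⟩
    rw [hS p] at hp
    rcases z2cases (chi A₁ ⬝ᵥ p) with ha | ha <;> rcases z2cases (chi A₂ ⬝ᵥ p) with hb | hb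
    · rw [ha, hb, zero_smul, zero_smul, add_zero, add_zero] at hp
      exact h1 ⟨p, hp⟩
    · -- a = 0, b = 1 : N p + chi A₁ = chi A₁ so N p = 0, but then a = b
      rw [ha, hb, zero_smul, one_smul, add_zero] at hp
      have hker : (nbhdMatrix G).mulVec p = 0 := by
        linear_combination (norm := ring_nf) hp
      have := F1 p hker
      rw [ha, hb] at this
      exact absurd this (by decide)
    · -- a = 1, b = 0 : N p + chi A₂ = chi A₁ so N p = chi A₁ + chi A₂, but then a = b
      rw [ha, hb, one_smul, zero_smul, add_zero] at hp
      have hft : (nbhdMatrix G).mulVec p = chi A₁ + chi A₂ := by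
        linear_combination (norm := ring_nf) hp - htwo' * chi A₂
      have := F2 p hft
      rw [ha, hb] at this
      exact absurd this (by decide)
    · -- a = 1, b = 1 : N p = chi A₂, contradiction
      rw [ha, hb, one_smul, one_smul] at hp
      exact h2 ⟨p, by linear_combination (norm := ring_nf) hp - htwo' * chi A₂⟩
  · -- HO A₂ in G*
    rintro ⟨p, hp⟩
    rw [hS p] at hp
    rcases z2cases (chi A₁ ⬝ᵥ p) with ha | ha <;> rcases z2cases (chi A₂ ⬝ᵥ p) with hb | hb
    · rw [ha, hb, zero_smul, zero_smul, add_zero, add_zero] at hp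
      exact h2 ⟨p, hp⟩
    · -- a = 0, b = 1 : N p + chi A₁ = chi A₂ so N p = chi A₁ + chi A₂, a = b fails
      rw [ha, hb, zero_smul, one_smul, add_zero] at hp
      have hft : (nbhdMatrix G).mulVec p = chi A₁ + chi A₂ := by
        linear_combination (norm := ring_nf) hp - htwo' * chi A₁
      have := F2 p hft
      rw [ha, hb] at this
      exact absurd this (by decide)
    · -- a = 1, b = 0 : N p + chi A₂ = chi A₂ so N p = 0, a = b fails
      rw [ha, hb, one_smul, zero_smul, add_zero] at hp
      have hker : (nbhdMatrix G).mulVec p = 0 := by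
        linear_combination (norm := ring_nf) hp
      have := F1 p hker
      rw [ha, hb] at this
      exact absurd this (by decide)
    · -- a = 1, b = 1 : N p = chi A₁, contradiction
      rw [ha, hb, one_smul, one_smul] at hp
      exact h1 ⟨p, by linear_combination (norm := ring_nf) hp - htwo' * chi A₁⟩
  · -- nullity
    obtain ⟨w, hw⟩ : ∃ w : V → ZMod 2, w = p₀ + k₁ := ⟨_, rfl⟩
    have hwN : (nbhdMatrix G).mulVec w = chi A₁ + chi A₂ := by
      rw [hw, Matrix.mulVec_add, hp₀N, hk₁0, add_zero]
    have hk₁2 : chi A₂ ⬝ᵥ k₁ = 1 := by rw [← F1 k₁ hk₁0]; exact hk₁1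
    have hw1 : chi A₁ ⬝ᵥ w = 0 := by
      rw [hw, dotProduct_add, hp₀1, hk₁1]; exact z2add 1
    have hw2 : chi A₂ ⬝ᵥ w = 0 := by
      rw [hw, dotProduct_add, hp₀2, hk₁2]; exact z2add 1
    let T : (V → ZMod 2) →ₗ[ZMod 2] (V → ZMod 2) :=
      { toFun := fun p => p + (chi A₁ ⬝ᵥ p) • w
        map_add' := by
          intro x y
          rw [dotProduct_add, add_smul]
          module
        map_smul' := by
          intro m x
          rw [dotProduct_smul, smul_eq_mul, RingHom.id_apply, mul_smul]
          module }
    have hTapp : ∀ p, T p = p + (chi A₁ ⬝ᵥ p) • w := fun _ => rfl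
    have hTT : ∀ p, T (T p) = p := by
      intro p
      rw [hTapp, hTapp, dotProduct_add, dotProduct_smul, hw1, smul_zero,
        add_zero, add_assoc, ← add_smul, z2add, zero_smul, add_zero]
    have hTkerN : ∀ p, (nbhdMatrix G).mulVec p = 0 →
        (starMatrix G A₁ A₂).mulVec (T p) = 0 := by
      intro p hp
      have hab : chi A₂ ⬝ᵥ p = chi A₁ ⬝ᵥ p := (F1 p hp).symm
      rw [hTapp]
      rcases z2cases (chi A₁ ⬝ᵥ p) with h | h
      · rw [h, zero_smul, add_zero, hS p, hp, hab, h, zero_smul, zero_smul]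
        simp
      · rw [h, one_smul, hS (p + w), Matrix.mulVec_add, hp, zero_add, hwN,
          dotProduct_add, dotProduct_add, hab, h, hw1, hw2]
        simp only [add_zero, one_smul]
        linear_combination (norm := ring_nf) htwo' * (chi A₁ + chi A₂)
    have hTkerS : ∀ p, (starMatrix G A₁ A₂).mulVec p = 0 →
        (nbhdMatrix G).mulVec (T p) = 0 := by
      intro p hp
      rw [hS p] at hp
      rw [hTapp]
      rcases z2cases (chi A₁ ⬝ᵥ p) with ha | ha <;> rcases z2cases (chi A₂ ⬝ᵥ p) with hb | hb
      · rw [ha, hb, zero_smul, zero_smul, add_zero, add_zero] at hp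
        rw [ha, zero_smul, add_zero]
        exact hp
      · rw [ha, hb, zero_smul, one_smul, add_zero] at hp
        exact absurd ⟨p, by linear_combination (norm := ring_nf) hp - htwo' * chi A₁⟩ h1
      · rw [ha, hb, one_smul, zero_smul, add_zero] at hp
        exact absurd ⟨p, by linear_combination (norm := ring_nf) hp - htwo' * chi A₂⟩ h2
      · rw [ha, hb, one_smul, one_smul] at hp
        have hN : (nbhdMatrix G).mulVec p = chi A₁ + chi A₂ := by
          linear_combination (norm := ring_nf) hp - htwo' * (chi A₁ + chi A₂)
        rw [ha, one_smul, Matrix.mulVec_add, hN, hwN]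
        exact htwo _
    have memS : ∀ x : V → ZMod 2,
        x ∈ LinearMap.ker (starMatrix G A₁ A₂).mulVecLin ↔
          (starMatrix G A₁ A₂).mulVec x = 0 := fun x => by
      rw [LinearMap.mem_ker, Matrix.mulVecLin_apply]
    have memN : ∀ x : V → ZMod 2,
        x ∈ LinearMap.ker (nbhdMatrix G).mulVecLin ↔
          (nbhdMatrix G).mulVec x = 0 := fun x => by
      rw [LinearMap.mem_ker, Matrix.mulVecLin_apply]
    let f1 : LinearMap.ker (starMatrix G A₁ A₂).mulVecLin →ₗ[ZMod 2]
        LinearMap.ker (nbhdMatrix G).mulVecLin :=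
      T.restrict (fun x hx => (memN _).mpr (hTkerS x ((memS x).mp hx)))
    let f2 : LinearMap.ker (nbhdMatrix G).mulVecLin →ₗ[ZMod 2]
        LinearMap.ker (starMatrix G A₁ A₂).mulVecLin :=
      T.restrict (fun x hx => (memS _).mpr (hTkerN x ((memN x).mp hx)))
    have heq : LinearMap.ker (starMatrix G A₁ A₂).mulVecLin ≃ₗ[ZMod 2]
        LinearMap.ker (nbhdMatrix G).mulVecLin :=
      LinearEquiv.ofLinear f1 f2
        (LinearMap.ext fun x => Subtype.ext (hTT x.1))
        (LinearMap.ext fun x => Subtype.ext (hTT x.1))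
    exact heq.finrank_eq
end
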